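/- arXiv:2106.01180 — 5 statements merged into one kernel-verified Lean document; each statement's English description precedes it below -/
import Mathlib

section
/- For every h ≥ 0 there exists a unique β > 0 satisfying β² = 2·r(tanh(β·h)), where r is the modified binary entropy. Moreover this solution lies in the interval (0, √(2 ln 2)] for h > 0, and equals √(2 ln 2) when h = 0. -/
open Real

/-- The modified binary entropy. -/
noncomputable def modEntropy (y : ℝ) : ℝ :=
  -((1 - y) / 2 * Real.log ((1 - y) / 2)) - (1 + y) / 2 * Real.log ((1 + y) / 2)

lemma modEntropy_eq_binEntropy (y : ℝ) : modEntropy y = Real.binEntropy ((1 - y) / 2) := by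
  have h : 1 - (1 - y) / 2 = (1 + y) / 2 := by ring
  rw [Real.binEntropy, h, Real.log_inv, Real.log_inv, modEntropy]
  ring

lemma modEntropy_le_log_two (y : ℝ) : modEntropy y ≤ Real.log 2 := by
  rw [modEntropy_eq_binEntropy]; exact Real.binEntropy_le_log_two

lemma modEntropy_zero : modEntropy 0 = Real.log 2 := by
  have h0 : (1 - (0:ℝ)) / 2 = 2⁻¹ := by norm_num
  rw [modEntropy_eq_binEntropy, h0, Real.binEntropy_two_inv]

lemma modEntropy_anti {a b : ℝ} (ha : 0 ≤ a) (hab : a ≤ b) (hb : b ≤ 1) :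
    modEntropy b ≤ modEntropy a := by
  rw [modEntropy_eq_binEntropy, modEntropy_eq_binEntropy]
  have := Real.binEntropy_strictMonoOn.monotoneOn
    (a := (1 - b) / 2) (b := (1 - a) / 2)
    (Set.mem_Icc.mpr ⟨by linarith, by linarith⟩)
    (Set.mem_Icc.mpr ⟨by linarith, by linarith⟩)
    (by linarith)
  exact this

lemma continuous_modEntropy : Continuous modEntropy := by
  have : modEntropy = fun y => Real.binEntropy ((1 - y) / 2) := by
    funext y; exact modEntropy_eq_binEntropy y
  rw [this]
  exact Real.binEntropy_continuous.comp (by continuity)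

lemma tanh_mono {a b : ℝ} (hab : a ≤ b) : Real.tanh a ≤ Real.tanh b := by
  rw [Real.tanh_eq_sinh_div_cosh, Real.tanh_eq_sinh_div_cosh,
    div_le_div_iff₀ (Real.cosh_pos a) (Real.cosh_pos b)]
  have h1 : Real.sinh (a - b) ≤ 0 := by
    rw [← Real.sinh_zero]
    exact Real.sinh_le_sinh.mpr (by linarith)
  rw [Real.sinh_sub] at h1
  nlinarith [Real.cosh_pos a, Real.cosh_pos b]

lemma tanh_nonneg' {x : ℝ} (hx : 0 ≤ x) : 0 ≤ Real.tanh x := by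
  have := tanh_mono hx
  rwa [Real.tanh_zero] at this

lemma tanh_le_one' (x : ℝ) : Real.tanh x ≤ 1 := by
  rw [Real.tanh_eq_sinh_div_cosh, div_le_one (Real.cosh_pos x)]
  exact (Real.sinh_lt_cosh x).le

lemma continuous_tanh : Continuous Real.tanh := by
  have : Real.tanh = fun x => Real.sinh x / Real.cosh x := by
    funext x; exact Real.tanh_eq_sinh_div_cosh x
  rw [this]
  exact Real.continuous_sinh.div Real.continuous_cosh (fun x => (Real.cosh_pos x).ne')

/-- For every `h ≥ 0` there exists a unique `β > 0` with `β² = 2 r(tanh(βh))`;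
for `h > 0` the solution lies in `(0, √(2 ln 2)]`, and for `h = 0` it equals `√(2 ln 2)`. -/
theorem exists_unique_critical_beta :
    (∀ h : ℝ, 0 ≤ h → ∃! β : ℝ, 0 < β ∧ β ^ 2 = 2 * modEntropy (Real.tanh (β * h))) ∧
    (∀ h : ℝ, 0 < h → ∀ β : ℝ,
      (0 < β ∧ β ^ 2 = 2 * modEntropy (Real.tanh (β * h))) →
        β ∈ Set.Ioc 0 (Real.sqrt (2 * Real.log 2))) ∧
    (∀ β : ℝ, (0 < β ∧ β ^ 2 = 2 * modEntropy (Real.tanh (β * 0))) →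
      β = Real.sqrt (2 * Real.log 2)) := by
  have hlog2 : (0:ℝ) < Real.log 2 := Real.log_pos (by norm_num)
  set B : ℝ := Real.sqrt (2 * Real.log 2) with hB
  have hBsq : B ^ 2 = 2 * Real.log 2 := Real.sq_sqrt (by linarith)
  have hBpos : 0 < B := Real.sqrt_pos.mpr (by linarith)
  -- the basic inequality: β ≤ B for any solution with h ≥ 0
  have key_le : ∀ h β : ℝ, 0 < β → β ^ 2 = 2 * modEntropy (Real.tanh (β * h)) → β ≤ B := by
    intro h β hβ heq
    have h1 : β ^ 2 ≤ B ^ 2 := by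
      rw [heq, hBsq]
      have := modEntropy_le_log_two (Real.tanh (β * h))
      linarith
    nlinarith
  refine ⟨?_, ?_, ?_⟩
  · intro h hh
    -- g is strictly monotone on Ici 0
    set g : ℝ → ℝ := fun β => β ^ 2 - 2 * modEntropy (Real.tanh (β * h)) with hg
    have gmono : StrictMonoOn g (Set.Ici 0) := by
      intro a ha b hb hab
      simp only [Set.mem_Ici] at ha hb
      have h1 : a ^ 2 < b ^ 2 := by nlinarith
      have h2 : modEntropy (Real.tanh (b * h)) ≤ modEntropy (Real.tanh (a * h)) := by
        apply modEntropy_anti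
        · exact tanh_nonneg' (mul_nonneg ha hh)
        · exact tanh_mono (by nlinarith)
        · exact tanh_le_one' _
      simp only [hg]
      linarith
    have gcont : Continuous g := by
      apply (continuous_pow 2).sub
      exact (continuous_const.mul
        (continuous_modEntropy.comp (continuous_tanh.comp (continuous_id.mul continuous_const))))
    have g0 : g 0 < 0 := by
      simp only [hg]
      rw [zero_mul, Real.tanh_zero, modEntropy_zero]
      norm_num
      linarith
    have gB : 0 ≤ g B := by
      simp only [hg]
      rw [hBsq]
      have := modEntropy_le_log_two (Real.tanh (B * h))
      linarith
    -- IVT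
    obtain ⟨β, hβmem, hβeq⟩ := intermediate_value_Icc hBpos.le gcont.continuousOn
      (Set.mem_Icc.mpr ⟨g0.le, gB⟩)
    have hβpos : 0 < β := by
      rcases lt_or_eq_of_le hβmem.1 with h' | h'
      · exact h'
      · exfalso; rw [← h'] at hβeq; linarith
    refine ⟨β, ⟨hβpos, by simp only [hg] at hβeq; linarith⟩, ?_⟩
    intro β' ⟨hβ'pos, hβ'eq⟩
    have e1 : g β' = 0 := by simp only [hg]; linarith
    exact gmono.injOn hβ'pos.le hβpos.le (e1.trans hβeq.symm)
  · intro h hh β ⟨hβpos, hβeq⟩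
    exact Set.mem_Ioc.mpr ⟨hβpos, key_le h β hβpos hβeq⟩
  · intro β ⟨hβpos, hβeq⟩
    rw [mul_zero, Real.tanh_zero, modEntropy_zero] at hβeq
    rw [hB, ← hβeq, Real.sqrt_sq hβpos.le]
end

section
/- The function h ↦ β_c(h), where β_c(h) is the unique positive solution of β² = 2·r(tanh(β·h)), is strictly decreasing on [0, ∞). -/
open Real

/-- `G x = log (2 cosh x) - x tanh x`. -/
noncomputable def entG (x : ℝ) : ℝ := Real.log (2 * Real.cosh x) - x * Real.sinh x / Real.cosh x

lemma modEntropy_tanh (x : ℝ) : modEntropy (Real.tanh x) = entG x := by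
  have hc : (0:ℝ) < Real.cosh x := Real.cosh_pos x
  have h1 : (1 - Real.tanh x) / 2 = Real.exp (-x) / (2 * Real.cosh x) := by
    rw [Real.tanh_eq_sinh_div_cosh, ← Real.cosh_sub_sinh]
    field_simp
  have h2 : (1 + Real.tanh x) / 2 = Real.exp x / (2 * Real.cosh x) := by
    rw [Real.tanh_eq_sinh_div_cosh, ← Real.cosh_add_sinh]
    field_simp
  have hne : (2 * Real.cosh x) ≠ 0 := by positivity
  have l1 : Real.log (Real.exp (-x) / (2 * Real.cosh x))
      = -x - Real.log (2 * Real.cosh x) := by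
    rw [Real.log_div (Real.exp_ne_zero _) hne, Real.log_exp]
  have l2 : Real.log (Real.exp x / (2 * Real.cosh x))
      = x - Real.log (2 * Real.cosh x) := by
    rw [Real.log_div (Real.exp_ne_zero _) hne, Real.log_exp]
  rw [modEntropy, h1, h2, l1, l2, entG]
  have e1 : Real.exp x = Real.cosh x + Real.sinh x := (Real.cosh_add_sinh x).symm
  have e2 : Real.exp (-x) = Real.cosh x - Real.sinh x := (Real.cosh_sub_sinh x).symm
  field_simp
  rw [e1, e2]
  ring

lemma entG_hasDerivAt (x : ℝ) :
    HasDerivAt entG (-(x / Real.cosh x ^ 2)) x := by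
  have hc : (0:ℝ) < Real.cosh x := Real.cosh_pos x
  have h1 : HasDerivAt (fun x => Real.log (2 * Real.cosh x))
      (2 * Real.sinh x / (2 * Real.cosh x)) x := by
    have : HasDerivAt (fun x => 2 * Real.cosh x) (2 * Real.sinh x) x :=
      (Real.hasDerivAt_cosh x).const_mul 2
    exact this.log (by positivity)
  have h2 : HasDerivAt (fun x => x * Real.sinh x / Real.cosh x)
      ((( Real.sinh x + x * Real.cosh x) * Real.cosh x - x * Real.sinh x * Real.sinh x)
        / Real.cosh x ^ 2) x := by
    have hn : HasDerivAt (fun x => x * Real.sinh x) (Real.sinh x + x * Real.cosh x) x := by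
      have : HasDerivAt (fun x => x * Real.sinh x) (1 * Real.sinh x + id x * Real.cosh x) x :=
        (hasDerivAt_id x).mul (Real.hasDerivAt_sinh x)
      simpa [mul_comm] using this
    exact hn.div (Real.hasDerivAt_cosh x) (ne_of_gt hc)
  have h : HasDerivAt entG _ x := h1.sub h2
  convert h using 1
  have hsq : Real.cosh x ^ 2 - Real.sinh x ^ 2 = 1 := Real.cosh_sq_sub_sinh_sq x
  field_simp
  linear_combination x * hsq

lemma entG_strictAntiOn : StrictAntiOn entG (Set.Ici (0:ℝ)) := by
  apply strictAntiOn_of_deriv_neg (convex_Ici 0)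
  · exact fun x _ => (entG_hasDerivAt x).continuousAt.continuousWithinAt
  · intro x hx
    rw [interior_Ici] at hx
    rw [(entG_hasDerivAt x).deriv]
    have hc : (0:ℝ) < Real.cosh x := Real.cosh_pos x
    have hx0 : (0:ℝ) < x := hx
    have : 0 < x / Real.cosh x ^ 2 := by positivity
    linarith

/-- The map `h ↦ β_c(h)`, where `β_c(h)` is the unique positive solution of
`β² = 2 r(tanh(βh))`, is strictly decreasing on `[0, ∞)`. -/
theorem critical_beta_strictAnti (βc : ℝ → ℝ)
    (hβc : ∀ h : ℝ, 0 ≤ h →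
      0 < βc h ∧ (βc h) ^ 2 = 2 * modEntropy (Real.tanh (βc h * h))) :
    StrictAntiOn βc (Set.Ici (0 : ℝ)) := by
  intro a ha b hb hab
  simp only [Set.mem_Ici] at ha hb
  obtain ⟨hpa, hea⟩ := hβc a ha
  obtain ⟨hpb, heb⟩ := hβc b hb
  by_contra hle
  push_neg at hle
  have hb0 : 0 < b := lt_of_le_of_lt ha hab
  have harg : βc a * a < βc b * b := by
    calc βc a * a ≤ βc b * a := by nlinarith
    _ < βc b * b := by nlinarith
  have h1 : entG (βc b * b) < entG (βc a * a) :=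
    entG_strictAntiOn (by positivity : (0:ℝ) ≤ βc a * a) (show (0:ℝ) ≤ βc b * b by positivity) harg
  rw [modEntropy_tanh] at hea heb
  nlinarith
end

section
/- As h → 0⁺, the unique positive solution β_c(h) of β² = 2·r(tanh(βh)) satisfies β_c(h) = √(2 ln 2)·(1 − h²/2) + O(h⁴). -/
open Real Asymptotics

lemma tanh_hasDerivAt (x : ℝ) : HasDerivAt Real.tanh (1 - Real.tanh x ^ 2) x := by
  have hc : Real.cosh x ≠ 0 := (Real.cosh_pos x).ne'
  have h : HasDerivAt (fun y => Real.sinh y / Real.cosh y) ((Real.cosh x * Real.cosh x - Real.sinh x * Real.sinh x) / Real.cosh x ^ 2) x := (Real.hasDerivAt_sinh x).fun_div (Real.hasDerivAt_cosh x) hc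
  have heq : Real.tanh = fun y => Real.sinh y / Real.cosh y := by
    funext y; exact Real.tanh_eq_sinh_div_cosh y
  rw [heq]
  convert h using 1
  dsimp only
  field_simp

lemma tanh_sq_lt_one (t : ℝ) : Real.tanh t ^ 2 < 1 := by
  have hc := Real.cosh_pos t
  rw [Real.tanh_eq_sinh_div_cosh, div_pow, div_lt_one (by positivity)]
  nlinarith [Real.cosh_sq_sub_sinh_sq t]

lemma abs_tanh_le (x : ℝ) : |Real.tanh x| ≤ |x| := by
  have key := (convex_univ (𝕜 := ℝ) (E := ℝ)).norm_image_sub_le_of_norm_hasDerivWithin_le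
    (f := Real.tanh) (f' := fun t => 1 - Real.tanh t ^ 2) (C := 1)
    (fun t _ => (tanh_hasDerivAt t).hasDerivWithinAt)
    (fun t _ => by
      rw [Real.norm_eq_abs, abs_le]
      have := _root_.tanh_sq_lt_one t
      constructor <;> nlinarith [sq_nonneg (Real.tanh t)])
    (Set.mem_univ 0) (Set.mem_univ x)
  simpa [Real.tanh_zero] using key

lemma abs_tanh_sub_le (x : ℝ) : |Real.tanh x - x| ≤ |x| ^ 3 := by
  have key := (convex_Icc (-|x|) |x|).norm_image_sub_le_of_norm_hasDerivWithin_le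
    (f := fun t => Real.tanh t - t) (f' := fun t => 1 - Real.tanh t ^ 2 - 1) (C := |x| ^ 2)
    (fun t _ => ((tanh_hasDerivAt t).sub (hasDerivAt_id t)).hasDerivWithinAt)
    (fun t ht => by
      rw [Real.norm_eq_abs]
      have h1 : |Real.tanh t| ≤ |t| := abs_tanh_le t
      have h2 : |t| ≤ |x| := abs_le.mpr ⟨ht.1, ht.2⟩
      have h3 : Real.tanh t ^ 2 ≤ |x| ^ 2 := by
        nlinarith [sq_abs (Real.tanh t), sq_abs t, abs_nonneg (Real.tanh t), abs_nonneg t]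
      rw [abs_le]
      constructor <;> nlinarith [sq_nonneg (Real.tanh t)])
    (show (0:ℝ) ∈ Set.Icc (-|x|) |x| from ⟨neg_nonpos.mpr (abs_nonneg x), abs_nonneg x⟩)
    (show x ∈ Set.Icc (-|x|) |x| from ⟨neg_abs_le x, le_abs_self x⟩)
  simp only [Real.tanh_zero, sub_zero, Real.norm_eq_abs] at key
  calc |Real.tanh x - x| ≤ |x| ^ 2 * |x| := key
    _ = |x| ^ 3 := by ring

noncomputable def gEnt (y : ℝ) : ℝ :=
  (1 - y) / 2 * Real.log (1 - y) + (1 + y) / 2 * Real.log (1 + y)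

lemma modEntropy_eq {y : ℝ} (h1 : 0 < 1 - y) (h2 : 0 < 1 + y) :
    modEntropy y = Real.log 2 - gEnt y := by
  unfold modEntropy gEnt
  rw [Real.log_div h1.ne' two_ne_zero, Real.log_div h2.ne' two_ne_zero]
  ring

lemma gEnt_nonneg {y : ℝ} (h1 : 0 < 1 - y) (h2 : 0 < 1 + y) : 0 ≤ gEnt y := by
  have l1 : -Real.log (1 - y) ≤ (1 - y)⁻¹ - 1 := by
    have := Real.log_le_sub_one_of_pos (show (0:ℝ) < (1 - y)⁻¹ by positivity)
    rwa [Real.log_inv] at this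
  have l2 : -Real.log (1 + y) ≤ (1 + y)⁻¹ - 1 := by
    have := Real.log_le_sub_one_of_pos (show (0:ℝ) < (1 + y)⁻¹ by positivity)
    rwa [Real.log_inv] at this
  have e1 : (1 - y) * (1 - y)⁻¹ = 1 := mul_inv_cancel₀ h1.ne'
  have e2 : (1 + y) * (1 + y)⁻¹ = 1 := mul_inv_cancel₀ h2.ne'
  unfold gEnt
  nlinarith [mul_le_mul_of_nonneg_left l1 (by linarith : (0:ℝ) ≤ (1 - y) / 2),
    mul_le_mul_of_nonneg_left l2 (by linarith : (0:ℝ) ≤ (1 + y) / 2)]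

lemma gEnt_approx {y : ℝ} (hy : |y| ≤ 1 / 2) : |gEnt y - y ^ 2 / 2| ≤ 4 * y ^ 4 := by
  have hy1 : |y| < 1 := lt_of_le_of_lt hy (by norm_num)
  have hy2 : |(-y)| < 1 := by rwa [abs_neg]
  have hl := abs_le.mp hy
  have A := Real.abs_log_sub_add_sum_range_le hy1 3
  have B := Real.abs_log_sub_add_sum_range_le hy2 3
  norm_num [Finset.sum_range_succ] at A B
  -- A : |y + y^2/2 + y^3/3 + log (1-y)| ≤ |y|^4 / (1 - |y|)
  -- B : |-y + y^2/2 - y^3/3 + log (1+y)| ≤ |y|^4 / (1 - |y|) (with |-y| = |y|)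
  have hden : |y| ^ 4 / (1 - |y|) ≤ 2 * y ^ 4 := by
    rw [div_le_iff₀ (by linarith)]
    have : |y| ^ 4 = y ^ 4 := by rw [← abs_pow, abs_of_nonneg (by positivity)]
    nlinarith [pow_nonneg (abs_nonneg y) 4, this]
  set e1 := Real.log (1 - y) + (y + y ^ 2 / 2 + y ^ 3 / 3) with he1d
  set e2 := Real.log (1 + y) + (-y + y ^ 2 / 2 - y ^ 3 / 3) with he2d
  have he1 : |e1| ≤ 2 * y ^ 4 := by
    refine le_trans (le_of_eq ?_) (A.trans hden)
    rw [he1d]; ring_nf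
  have he2 : |e2| ≤ 2 * y ^ 4 := by
    refine le_trans (le_of_eq ?_) (B.trans hden)
    rw [he2d]; ring_nf
  have key : gEnt y - y ^ 2 / 2 = (1 - y) / 2 * e1 + (1 + y) / 2 * e2 + y ^ 4 / 3 := by
    rw [he1d, he2d]; unfold gEnt; ring
  have b1 : |(1 - y) / 2 * e1| ≤ 3 / 4 * (2 * y ^ 4) := by
    rw [abs_mul]
    apply mul_le_mul _ he1 (abs_nonneg _) (by norm_num)
    rw [abs_le]; constructor <;> [linarith; linarith]
  have b2 : |(1 + y) / 2 * e2| ≤ 3 / 4 * (2 * y ^ 4) := by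
    rw [abs_mul]
    apply mul_le_mul _ he2 (abs_nonneg _) (by norm_num)
    rw [abs_le]; constructor <;> [linarith; linarith]
  have h4 : (0:ℝ) ≤ y ^ 4 := by positivity
  calc |gEnt y - y ^ 2 / 2| = |(1 - y) / 2 * e1 + (1 + y) / 2 * e2 + y ^ 4 / 3| := by rw [key]
    _ ≤ |(1 - y) / 2 * e1 + (1 + y) / 2 * e2| + |y ^ 4 / 3| := abs_add_le _ _
    _ ≤ |(1 - y) / 2 * e1| + |(1 + y) / 2 * e2| + |y ^ 4 / 3| := by
        linarith [abs_add_le ((1 - y) / 2 * e1) ((1 + y) / 2 * e2)]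
    _ ≤ 3 / 4 * (2 * y ^ 4) + 3 / 4 * (2 * y ^ 4) + y ^ 4 / 3 := by
        rw [abs_of_nonneg (by positivity : (0:ℝ) ≤ y ^ 4 / 3)]; linarith
    _ ≤ 4 * y ^ 4 := by linarith

set_option maxHeartbeats 1600000 in
/-- As `h → 0⁺`, the unique positive solution `β_c(h)` of `β² = 2 r(tanh(βh))` satisfies
`β_c(h) = √(2 ln 2)·(1 − h²/2) + O(h⁴)`. -/
theorem critical_beta_small_field (βc : ℝ → ℝ)
    (hβc : ∀ h : ℝ, 0 ≤ h →
      0 < βc h ∧ (βc h) ^ 2 = 2 * modEntropy (Real.tanh (βc h * h))) :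
    (fun h : ℝ => βc h - Real.sqrt (2 * Real.log 2) * (1 - h ^ 2 / 2))
      =O[nhdsWithin 0 (Set.Ioi 0)] (fun h : ℝ => h ^ 4) := by
  rw [isBigO_iff]
  refine ⟨400, ?_⟩
  filter_upwards [Ioo_mem_nhdsGT_of_mem
    (Set.left_mem_Ico.mpr (by norm_num : (0:ℝ) < 1 / 100))] with h hh
  obtain ⟨h0, h1⟩ := hh
  obtain ⟨hβ, hEq⟩ := hβc h h0.le
  set β := βc h with hβd
  set t := Real.tanh (β * h) with htd
  set s := Real.sqrt (2 * Real.log 2) with hsd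
  have ht1 : t ^ 2 < 1 := _root_.tanh_sq_lt_one _
  have hm : 0 < 1 - t := by nlinarith [sq_nonneg (t - 1)]
  have hp : 0 < 1 + t := by nlinarith [sq_nonneg (t + 1)]
  have hEnt : β ^ 2 = 2 * (Real.log 2 - gEnt t) := by rw [hEq, modEntropy_eq hm hp]
  have hlog2 : 0 < Real.log 2 := Real.log_pos (by norm_num)
  have hlog2' : Real.log 2 ≤ 1 := by
    linarith [Real.log_le_sub_one_of_pos (show (0:ℝ) < 2 by norm_num)]
  have hlog2'' : 1 / 2 ≤ Real.log 2 := by linarith [Real.log_two_gt_d9]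
  have hg0 : 0 ≤ gEnt t := gEnt_nonneg hm hp
  have hβ2 : β ^ 2 ≤ 2 := by nlinarith
  have hβle : β ≤ 2 := by nlinarith
  have hβh : 0 ≤ β * h := by positivity
  have hth : |t| ≤ 2 * h := by
    calc |t| ≤ |β * h| := abs_tanh_le _
      _ = β * h := abs_of_nonneg hβh
      _ ≤ 2 * h := by nlinarith
  have hth2 : |t| ≤ 1 / 2 := by linarith
  have hgap : |gEnt t - t ^ 2 / 2| ≤ 4 * t ^ 4 := gEnt_approx hth2
  have ht4 : t ^ 4 ≤ 16 * h ^ 4 := by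
    have h1' : t ^ 4 = |t| ^ 4 := by rw [← abs_pow, abs_of_nonneg (by positivity)]
    have h2' : |t| ^ 4 ≤ (2 * h) ^ 4 := pow_le_pow_left₀ (abs_nonneg t) hth 4
    nlinarith
  have httd : |t - β * h| ≤ 8 * h ^ 3 := by
    calc |t - β * h| ≤ |β * h| ^ 3 := abs_tanh_sub_le _
      _ = (β * h) ^ 3 := by rw [abs_of_nonneg hβh]
      _ ≤ 8 * h ^ 3 := by
          rw [mul_pow]
          have hb3 : β ^ 3 ≤ 8 := by nlinarith [hβ.le, hβle]
          nlinarith [pow_pos h0 3, pow_nonneg hβ.le 3]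
  have htsum : |t + β * h| ≤ 4 * h := by
    calc |t + β * h| ≤ |t| + |β * h| := abs_add_le _ _
      _ ≤ 2 * h + 2 * h := by
          rw [abs_of_nonneg hβh]
          have : β * h ≤ 2 * h := by nlinarith
          linarith
      _ = 4 * h := by ring
  have hsq : |t ^ 2 - β ^ 2 * h ^ 2| ≤ 32 * h ^ 4 := by
    have e : t ^ 2 - β ^ 2 * h ^ 2 = (t - β * h) * (t + β * h) := by ring
    rw [e, abs_mul]
    calc |t - β * h| * |t + β * h| ≤ 8 * h ^ 3 * (4 * h) :=
          mul_le_mul httd htsum (abs_nonneg _) (by positivity)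
      _ = 32 * h ^ 4 := by ring
  have hE : |β ^ 2 * (1 + h ^ 2) - 2 * Real.log 2| ≤ 160 * h ^ 4 := by
    have expand : β ^ 2 * (1 + h ^ 2) - 2 * Real.log 2 =
        -2 * (gEnt t - t ^ 2 / 2) - (t ^ 2 - β ^ 2 * h ^ 2) := by
      linear_combination hEnt
    rw [expand]
    calc |(-2) * (gEnt t - t ^ 2 / 2) - (t ^ 2 - β ^ 2 * h ^ 2)|
        ≤ |(-2) * (gEnt t - t ^ 2 / 2)| + |t ^ 2 - β ^ 2 * h ^ 2| := abs_sub _ _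
      _ = 2 * |gEnt t - t ^ 2 / 2| + |t ^ 2 - β ^ 2 * h ^ 2| := by
          rw [abs_mul]; norm_num
      _ ≤ 2 * (4 * t ^ 4) + 32 * h ^ 4 := by linarith
      _ ≤ 160 * h ^ 4 := by linarith
  have hs2 : s ^ 2 = 2 * Real.log 2 := Real.sq_sqrt (by positivity)
  have hs0 : 0 ≤ s := Real.sqrt_nonneg _
  have hs1 : 1 ≤ s := by
    rw [hsd, show (1:ℝ) = Real.sqrt 1 from Real.sqrt_one.symm]
    exact Real.sqrt_le_sqrt (by linarith)
  have hWs : h ^ 2 ≤ (1 / 100) ^ 2 := pow_le_pow_left₀ h0.le h1.le 2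
  have hW : 1 / 2 ≤ 1 - h ^ 2 / 2 := by norm_num at hWs ⊢; linarith
  have hP : 1 / 2 ≤ s * (1 - h ^ 2 / 2) := by
    calc (1:ℝ) / 2 = 1 * (1 / 2) := by ring
      _ ≤ s * (1 - h ^ 2 / 2) := mul_le_mul hs1 hW (by norm_num) hs0
  have hid : (β ^ 2 - (s * (1 - h ^ 2 / 2)) ^ 2) * (1 + h ^ 2) =
      (β ^ 2 * (1 + h ^ 2) - 2 * Real.log 2) +
        2 * Real.log 2 * (3 * h ^ 4 / 4 - h ^ 6 / 4) := by
    have hp2 : (s * (1 - h ^ 2 / 2)) ^ 2 = 2 * Real.log 2 * (1 - h ^ 2 / 2) ^ 2 := by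
      rw [mul_pow, hs2]
    rw [hp2]; ring
  have hsecond : |2 * Real.log 2 * (3 * h ^ 4 / 4 - h ^ 6 / 4)| ≤ 2 * h ^ 4 := by
    have h6le : h ^ 6 ≤ h ^ 4 := pow_le_pow_of_le_one h0.le (by linarith) (by norm_num)
    have hnn : 0 ≤ 3 * h ^ 4 / 4 - h ^ 6 / 4 := by
      linarith [pow_nonneg h0.le 4, pow_nonneg h0.le 6]
    have hXle : 3 * h ^ 4 / 4 - h ^ 6 / 4 ≤ h ^ 4 := by
      linarith [pow_nonneg h0.le 6, pow_nonneg h0.le 4]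
    rw [abs_of_nonneg (by positivity)]
    calc 2 * Real.log 2 * (3 * h ^ 4 / 4 - h ^ 6 / 4)
        ≤ 2 * (3 * h ^ 4 / 4 - h ^ 6 / 4) := mul_le_mul_of_nonneg_right (by linarith) hnn
      _ ≤ 2 * h ^ 4 := by linarith
  have hPP : |β ^ 2 - (s * (1 - h ^ 2 / 2)) ^ 2| ≤ 162 * h ^ 4 := by
    have habs : |(β ^ 2 - (s * (1 - h ^ 2 / 2)) ^ 2) * (1 + h ^ 2)| ≤ 162 * h ^ 4 := by
      rw [hid]
      calc |(β ^ 2 * (1 + h ^ 2) - 2 * Real.log 2) +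
            2 * Real.log 2 * (3 * h ^ 4 / 4 - h ^ 6 / 4)|
          ≤ |β ^ 2 * (1 + h ^ 2) - 2 * Real.log 2| +
            |2 * Real.log 2 * (3 * h ^ 4 / 4 - h ^ 6 / 4)| := abs_add_le _ _
        _ ≤ 162 * h ^ 4 := by linarith
    calc |β ^ 2 - (s * (1 - h ^ 2 / 2)) ^ 2|
        ≤ |β ^ 2 - (s * (1 - h ^ 2 / 2)) ^ 2| * (1 + h ^ 2) :=
          le_mul_of_one_le_right (abs_nonneg _) (by nlinarith)
      _ = |(β ^ 2 - (s * (1 - h ^ 2 / 2)) ^ 2) * (1 + h ^ 2)| := by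
          rw [abs_mul, abs_of_nonneg (by positivity : (0:ℝ) ≤ 1 + h ^ 2)]
      _ ≤ 162 * h ^ 4 := habs
  have hfac : |β - s * (1 - h ^ 2 / 2)| * (β + s * (1 - h ^ 2 / 2)) ≤ 162 * h ^ 4 := by
    have e1 : |β - s * (1 - h ^ 2 / 2)| * (β + s * (1 - h ^ 2 / 2)) =
        |(β - s * (1 - h ^ 2 / 2)) * (β + s * (1 - h ^ 2 / 2))| := by
      rw [abs_mul, abs_of_nonneg (by linarith : (0:ℝ) ≤ β + s * (1 - h ^ 2 / 2))]
    rw [e1, show (β - s * (1 - h ^ 2 / 2)) * (β + s * (1 - h ^ 2 / 2)) =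
        β ^ 2 - (s * (1 - h ^ 2 / 2)) ^ 2 from by ring]
    exact hPP
  rw [Real.norm_eq_abs, Real.norm_eq_abs, abs_of_nonneg (by positivity : (0:ℝ) ≤ h ^ 4)]
  have hden : 1 / 2 ≤ β + s * (1 - h ^ 2 / 2) := by linarith
  have step : |β - s * (1 - h ^ 2 / 2)| * (1 / 2) ≤
      |β - s * (1 - h ^ 2 / 2)| * (β + s * (1 - h ^ 2 / 2)) :=
    mul_le_mul_of_nonneg_left hden (abs_nonneg _)
  linarith [pow_nonneg h0.le 4]
end

section
/- As h → ∞, the unique positive solution β_c(h) of β² = 2·r(tanh(βh)) satisfies lim_{h→∞} (h·β_c(h))/ln h = 1. -/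
open Real Filter

lemma tanh_frac (x : ℝ) :
    (1 - Real.tanh x) / 2 = Real.exp (-(2*x)) / (1 + Real.exp (-(2*x))) ∧
    (1 + Real.tanh x) / 2 = 1 / (1 + Real.exp (-(2*x))) := by
  have hx := Real.exp_pos x
  have hx' := Real.exp_pos (-x)
  have hu := Real.exp_pos (-(2*x))
  have hprod : Real.exp x * Real.exp (-x) = 1 := by rw [← Real.exp_add]; simp
  have h2 : Real.exp (-(2*x)) = Real.exp (-x) * Real.exp (-x) := by
    rw [← Real.exp_add]; ring_nf
  have hc : 0 < Real.cosh x := Real.cosh_pos x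
  constructor <;>
  · rw [Real.tanh_eq_sinh_div_cosh, Real.sinh_eq, Real.cosh_eq, h2]
    have : Real.exp x + Real.exp (-x) > 0 := by positivity
    field_simp
    nlinarith [hprod]

lemma entropy_formula (x : ℝ) :
    modEntropy (Real.tanh x) =
      Real.log (1 + Real.exp (-(2*x))) +
        2*x * Real.exp (-(2*x)) / (1 + Real.exp (-(2*x))) := by
  obtain ⟨h1, h2⟩ := tanh_frac x
  have hu := Real.exp_pos (-(2*x))
  have hd : (0:ℝ) < 1 + Real.exp (-(2*x)) := by positivity
  unfold modEntropy
  rw [h1, h2]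
  rw [Real.log_div (ne_of_gt hu) (ne_of_gt hd), Real.log_div one_ne_zero (ne_of_gt hd),
    Real.log_exp, Real.log_one]
  field_simp
  ring

lemma entropy_upper {x : ℝ} (hx : 0 ≤ x) :
    modEntropy (Real.tanh x) ≤ (1 + 2*x) * Real.exp (-(2*x)) := by
  rw [entropy_formula]
  have hu := Real.exp_pos (-(2*x))
  have hd : (0:ℝ) < 1 + Real.exp (-(2*x)) := by positivity
  have hlog : Real.log (1 + Real.exp (-(2*x))) ≤ Real.exp (-(2*x)) := by
    have := Real.log_le_sub_one_of_pos hd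
    linarith
  have hfrac : 2*x * Real.exp (-(2*x)) / (1 + Real.exp (-(2*x))) ≤ 2*x * Real.exp (-(2*x)) := by
    rw [div_le_iff₀ hd]
    nlinarith [mul_nonneg (mul_nonneg hx hu.le) hu.le]
  nlinarith

lemma entropy_lower {x : ℝ} (hx : 0 ≤ x) :
    x * Real.exp (-(2*x)) ≤ modEntropy (Real.tanh x) := by
  rw [entropy_formula]
  have hu := Real.exp_pos (-(2*x))
  have hd : (0:ℝ) < 1 + Real.exp (-(2*x)) := by positivity
  have hle1 : Real.exp (-(2*x)) ≤ 1 := by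
    rw [Real.exp_le_one_iff]; linarith
  have hlog : 0 ≤ Real.log (1 + Real.exp (-(2*x))) := by
    apply Real.log_nonneg; linarith
  have hfrac : x * Real.exp (-(2*x)) ≤ 2*x * Real.exp (-(2*x)) / (1 + Real.exp (-(2*x))) := by
    rw [le_div_iff₀ hd]
    nlinarith [mul_nonneg (mul_nonneg hx hu.le) hu.le, hle1]
  linarith

lemma env_mono {s t : ℝ} (hs : 0 ≤ s) (hst : s ≤ t) :
    (1 + 2*t) * Real.exp (-(2*t)) ≤ (1 + 2*s) * Real.exp (-(2*s)) := by
  have h1 : 1 + 2*(t-s) ≤ Real.exp (2*(t-s)) := by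
    have := Real.add_one_le_exp (2*(t-s)); linarith
  have h2 : (1 + 2*t) ≤ (1 + 2*s) * Real.exp (2*(t-s)) := by
    nlinarith [Real.exp_pos (2*(t-s))]
  have h3 : Real.exp (-(2*t)) = Real.exp (-(2*s)) / Real.exp (2*(t-s)) := by
    rw [← Real.exp_sub]; ring_nf
  rw [h3, mul_div_assoc', div_le_iff₀ (Real.exp_pos _)]
  nlinarith [Real.exp_pos (-(2*s)), Real.exp_pos (2*(t-s))]

lemma poly_exp_tendsto (a b ε : ℝ) (hε : 0 < ε) :
    Filter.Tendsto (fun t : ℝ => (a + b*t) * Real.exp (-(ε*t))) Filter.atTop (nhds 0) := by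
  have h1 : Filter.Tendsto (fun s : ℝ => s * Real.exp (-s)) Filter.atTop (nhds 0) := by
    simpa using tendsto_pow_mul_exp_neg_atTop_nhds_zero 1
  have h2 : Filter.Tendsto (fun t : ℝ => ε * t) Filter.atTop Filter.atTop :=
    Filter.tendsto_id.const_mul_atTop hε
  have h3 : Filter.Tendsto (fun t : ℝ => (ε*t) * Real.exp (-(ε*t))) Filter.atTop (nhds 0) :=
    h1.comp h2
  have h4 : Filter.Tendsto (fun t : ℝ => Real.exp (-(ε*t))) Filter.atTop (nhds 0) :=
    Real.tendsto_exp_atBot.comp (Filter.tendsto_neg_atTop_atBot.comp h2)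
  have h5 : Filter.Tendsto (fun t : ℝ => a * Real.exp (-(ε*t)) + (b/ε) * ((ε*t) * Real.exp (-(ε*t))))
      Filter.atTop (nhds (a * 0 + (b/ε) * 0)) := (h4.const_mul a).add (h3.const_mul (b/ε))
  have heq : (fun t : ℝ => (a + b*t) * Real.exp (-(ε*t)))
      = fun t : ℝ => a * Real.exp (-(ε*t)) + (b/ε) * ((ε*t) * Real.exp (-(ε*t))) := by
    funext t; field_simp
  rw [heq]
  simpa using h5


/-- As `h → ∞`, the unique positive solution `β_c(h)` of `β² = 2 r(tanh(βh))` satisfies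
`lim_{h→∞} h·β_c(h)/ln h = 1`. -/
theorem critical_beta_large_field (βc : ℝ → ℝ)
    (hβc : ∀ h : ℝ, 0 ≤ h →
      0 < βc h ∧ (βc h) ^ 2 = 2 * modEntropy (Real.tanh (βc h * h))) :
    Tendsto (fun h : ℝ => h * βc h / Real.log h) atTop (nhds 1) := by
  rw [Metric.tendsto_nhds]
  intro ε hε
  have hL : Filter.Tendsto Real.log Filter.atTop Filter.atTop := Real.tendsto_log_atTop
  have hA0 : Filter.Tendsto (fun t : ℝ => (0 + (1-ε)*t) * Real.exp (-(2*ε*t)))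
      Filter.atTop (nhds 0) := poly_exp_tendsto 0 (1-ε) (2*ε) (by linarith)
  have hB0 : Filter.Tendsto (fun t : ℝ => (2 + 4*(1+ε)*t) * Real.exp (-(2*ε*t)))
      Filter.atTop (nhds 0) := poly_exp_tendsto 2 (4*(1+ε)) (2*ε) (by linarith)
  have hA : ∀ᶠ h : ℝ in Filter.atTop,
      (0 + (1-ε)*Real.log h) * Real.exp (-(2*ε*Real.log h)) < 2 :=
    hL.eventually (hA0.eventually_lt_const two_pos)
  have hB : ∀ᶠ h : ℝ in Filter.atTop,
      (2 + 4*(1+ε)*Real.log h) * Real.exp (-(2*ε*Real.log h)) < 1 :=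
    hL.eventually (hB0.eventually_lt_const one_pos)
  have hC : ∀ᶠ h : ℝ in Filter.atTop, (1:ℝ) ≤ Real.log h :=
    hL.eventually (Filter.eventually_ge_atTop 1)
  filter_upwards [hA, hB, hC, Filter.eventually_gt_atTop (0:ℝ)] with h hA hB hL1 hpos
  set L := Real.log h with hLdef
  have hL0 : (0:ℝ) < L := lt_of_lt_of_le one_pos hL1
  obtain ⟨hβpos, heq⟩ := hβc h hpos.le
  set β := βc h with hβdef
  have hexpL : Real.exp L = h := Real.exp_log hpos
  have hx : (0:ℝ) < β * h := mul_pos hβpos hpos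
  -- Lower bound: (1-ε)*L < β*h
  have claim1 : (1-ε)*L < β*h := by
    by_contra hcon
    push_neg at hcon
    have hEl := entropy_lower hx.le
    have h1 : 2*h*Real.exp (-(2*(β*h))) ≤ β := by
      have h2 : 2*(β*h)*Real.exp (-(2*(β*h))) ≤ β^2 := by
        rw [heq]; linarith
      nlinarith [Real.exp_pos (-(2*(β*h)))]
    have h3 : Real.exp (-(2*((1-ε)*L))) ≤ Real.exp (-(2*(β*h))) := by
      apply Real.exp_le_exp.mpr; linarith
    have h4 : 2*h*Real.exp (-(2*((1-ε)*L))) ≤ β := le_trans (by nlinarith) h1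
    -- multiply by h:  2*h^2*exp(-(2(1-ε)L)) ≤ β*h ≤ (1-ε)L
    have h5 : 2*h^2*Real.exp (-(2*((1-ε)*L))) ≤ (1-ε)*L := by nlinarith
    have h6 : h^2 * Real.exp (-(2*((1-ε)*L))) = Real.exp (2*ε*L) := by
      rw [← hexpL, ← Real.exp_nat_mul, ← Real.exp_add]
      ring_nf
    have h7 : (0:ℝ) < Real.exp (2*ε*L) := Real.exp_pos _
    have h8 : Real.exp (2*ε*L) * Real.exp (-(2*ε*L)) = 1 := by
      rw [← Real.exp_add]; ring_nf; exact Real.exp_zero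
    nlinarith [Real.exp_pos (-(2*ε*L))]
  -- Upper bound: β*h < (1+ε)*L
  have claim2 : β*h < (1+ε)*L := by
    by_contra hcon
    push_neg at hcon
    set s := (1+ε)*L with hsdef
    have hs0 : (0:ℝ) < s := by
      apply mul_pos; linarith; exact hL0
    have hEu := entropy_upper hx.le
    have hmono := env_mono hs0.le hcon
    have h1 : β^2 ≤ 2*(1+2*s)*Real.exp (-(2*s)) := by
      rw [heq]; nlinarith
    have h2 : s/h ≤ β := by
      rw [div_le_iff₀ hpos]; linarith
    have h3 : s^2 * Real.exp (-(2*L)) ≤ β^2 := by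
      have : (s/h)^2 ≤ β^2 := by
        apply sq_le_sq' _ h2
        nlinarith [div_pos hs0 hpos]
      have hh2 : h^2 = Real.exp (2*L) := by
        rw [← hexpL, sq, ← Real.exp_add]; ring_nf
      calc s^2 * Real.exp (-(2*L)) = (s/h)^2 := by
            rw [div_pow, hh2, Real.exp_neg, div_eq_mul_inv]
        _ ≤ β^2 := this
    have h4 : Real.exp (-(2*s)) = Real.exp (-(2*L)) * Real.exp (-(2*ε*L)) := by
      rw [← Real.exp_add, hsdef]; ring_nf
    have h5 : s^2 ≤ (2 + 4*(1+ε)*L) * Real.exp (-(2*ε*L)) := by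
      have hE2 : (0:ℝ) < Real.exp (-(2*L)) := Real.exp_pos _
      have : s^2 * Real.exp (-(2*L)) ≤ (2+4*(1+ε)*L) * Real.exp (-(2*ε*L)) * Real.exp (-(2*L)) := by
        rw [h4] at h1
        calc s^2 * Real.exp (-(2*L)) ≤ 2*(1+2*s)*(Real.exp (-(2*L)) * Real.exp (-(2*ε*L))) :=
              le_trans h3 h1
          _ = (2+4*(1+ε)*L) * Real.exp (-(2*ε*L)) * Real.exp (-(2*L)) := by rw [hsdef]; ring
      exact le_of_mul_le_mul_right this hE2
    have hs1 : (1:ℝ) ≤ s := by rw [hsdef]; nlinarith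
    have h6 : (1:ℝ) ≤ s^2 := by nlinarith [sq_nonneg (s-1)]
    linarith
  -- conclude
  have hub : h * β / L < 1 + ε := by
    rw [div_lt_iff₀ hL0]; nlinarith
  have hlb : 1 - ε < h * β / L := by
    rw [lt_div_iff₀ hL0]; nlinarith
  rw [Real.dist_eq, abs_lt]
  constructor <;> linarith
end

section
/- For the REM (A(x) = 1_{x=1}), constant fields h, Γ ≥ 0, and β ≥ 0, the limiting pressure max{Φ^REM(β,h), ln(2 cosh(β√(h²+Γ²)))} has the following property: the critical transversal field Γ_c(β,h) = √(β⁻²·arcosh(½·exp(Φ^REM(β,h)))² − h²) satisfies lim_{β→0} Γ_c(β,h) = 1 for every h ≥ 0. -/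
open Real Filter

/-- The inverse hyperbolic cosine, `arcosh x = ln(x + √(x² − 1))`. -/
noncomputable def arcosh (x : ℝ) : ℝ := Real.log (x + Real.sqrt (x ^ 2 - 1))

/-- The REM pressure with longitudinal field `h`, given the freezing temperature
function `βc`. -/
noncomputable def PhiREM (βc : ℝ → ℝ) (β h : ℝ) : ℝ :=
  if β ≤ βc h then Real.log 2 + β ^ 2 / 2 + Real.log (Real.cosh (β * h))
  else β * (βc h + h * Real.tanh (βc h * h))

/-- The critical transversal field of the QREM. -/
noncomputable def GammaC (βc : ℝ → ℝ) (β h : ℝ) : ℝ :=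
  Real.sqrt (β⁻¹ ^ 2 * (_root_.arcosh ((1 / 2) * Real.exp (PhiREM βc β h))) ^ 2 - h ^ 2)

private lemma slope_limit {f : ℝ → ℝ} {d : ℝ} (hf : HasDerivAt f d 0) (h0 : f 0 = 0) :
    Tendsto (fun x : ℝ => f x / x) (nhdsWithin 0 {(0:ℝ)}ᶜ) (nhds d) := by
  have h := hasDerivAt_iff_tendsto_slope.mp hf
  refine h.congr fun x => ?_
  simp [slope_def_field, h0]

private lemma tendsto_exp_sub_one :
    Tendsto (fun x : ℝ => (Real.exp x - 1) / x) (nhdsWithin 0 {(0:ℝ)}ᶜ) (nhds 1) := by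
  have hd : HasDerivAt (fun x : ℝ => Real.exp x - 1) 1 0 := by
    simpa using (Real.hasDerivAt_exp 0).sub_const 1
  simpa using slope_limit hd (by simp)

private lemma tendsto_arsinh_div :
    Tendsto (fun y : ℝ => Real.arsinh y / y) (nhdsWithin 0 {(0:ℝ)}ᶜ) (nhds 1) := by
  simpa using slope_limit (Real.hasDerivAt_arsinh 0) Real.arsinh_zero

private lemma tendsto_sinh_div (h : ℝ) :
    Tendsto (fun β : ℝ => Real.sinh (β * h) / β) (nhdsWithin 0 {(0:ℝ)}ᶜ) (nhds h) := by
  have hd : HasDerivAt (fun β : ℝ => Real.sinh (β * h)) h 0 := by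
    simpa using ((hasDerivAt_id (0:ℝ)).mul_const h).sinh
  simpa using slope_limit hd (by simp)

set_option maxHeartbeats 1000000 in
/-- For the REM with constant fields, the critical transversal field satisfies
`lim_{β→0⁺} Γ_c(β,h) = 1` for every `h ≥ 0`. -/
theorem GammaC_high_temperature_limit (βc : ℝ → ℝ)
    (hβc : ∀ h : ℝ, 0 ≤ h →
      0 < βc h ∧ (βc h) ^ 2 = 2 * modEntropy (Real.tanh (βc h * h))) :
    ∀ h : ℝ, 0 ≤ h →
      Tendsto (fun β => GammaC βc β h) (nhdsWithin 0 (Set.Ioi 0)) (nhds 1) := by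
  intro h hh
  obtain ⟨hβc0, -⟩ := hβc h hh
  set L := nhdsWithin (0:ℝ) (Set.Ioi 0) with hL
  have hLne : L ≤ nhdsWithin (0:ℝ) {(0:ℝ)}ᶜ :=
    nhdsWithin_mono 0 (fun x hx => ne_of_gt hx)
  have hLn : L ≤ nhds 0 := nhdsWithin_le_nhds
  set f : ℝ → ℝ := fun β => Real.exp (β ^ 2 / 2) * Real.cosh (β * h) with hf
  have hf1 : ∀ β, 1 ≤ f β := fun β =>
    one_le_mul_of_one_le_of_one_le (Real.one_le_exp (by positivity)) (Real.one_le_cosh _)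
  have hfgt : ∀ β, 0 < β → 1 < f β := by
    intro β hβ
    have h1 : 1 < Real.exp (β ^ 2 / 2) := by
      nlinarith [Real.add_one_le_exp (β ^ 2 / 2), pow_pos hβ 2]
    calc 1 < Real.exp (β ^ 2 / 2) * 1 := by linarith
    _ ≤ f β :=
        mul_le_mul_of_nonneg_left (Real.one_le_cosh _) (le_of_lt (Real.exp_pos _))
  set u : ℝ → ℝ := fun β => Real.sqrt (f β ^ 2 - 1) with hu
  -- Step 1: (f β ^ 2 - 1)/β^2 → 1 + h^2
  have hD : Tendsto (fun β => (f β ^ 2 - 1) / β ^ 2) L (nhds (1 + h ^ 2)) := by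
    have hsq : Tendsto (fun β : ℝ => β ^ 2) L (nhdsWithin 0 {(0:ℝ)}ᶜ) := by
      rw [tendsto_nhdsWithin_iff]
      refine ⟨by simpa using ((continuous_pow 2).tendsto 0).mono_left hLn, ?_⟩
      filter_upwards [self_mem_nhdsWithin] with β (hβ : 0 < β)
      simpa using pow_ne_zero 2 (ne_of_gt hβ)
    have h1 : Tendsto (fun β => (Real.exp (β ^ 2) - 1) / β ^ 2) L (nhds 1) :=
      tendsto_exp_sub_one.comp hsq
    have hcosh : Tendsto (fun β : ℝ => Real.cosh (β * h) ^ 2) L (nhds 1) := by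
      have hc : Continuous fun β : ℝ => Real.cosh (β * h) ^ 2 :=
        (Real.continuous_cosh.comp (continuous_id.mul continuous_const)).pow 2
      simpa using (hc.tendsto 0).mono_left hLn
    have h2 : Tendsto (fun β => (Real.sinh (β * h) / β) ^ 2) L (nhds (h ^ 2)) :=
      ((tendsto_sinh_div h).mono_left hLne).pow 2
    have hmain : Tendsto
        (fun β => (Real.exp (β ^ 2) - 1) / β ^ 2 * Real.cosh (β * h) ^ 2
          + (Real.sinh (β * h) / β) ^ 2) L (nhds (1 * 1 + h ^ 2)) :=
      (h1.mul hcosh).add h2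
    rw [one_mul] at hmain
    refine hmain.congr' ?_
    filter_upwards [self_mem_nhdsWithin] with β (hβ : 0 < β)
    have hβ0 : β ≠ 0 := ne_of_gt hβ
    have he : Real.exp (β ^ 2 / 2) ^ 2 = Real.exp (β ^ 2) := by
      rw [sq, ← Real.exp_add]; ring_nf
    have key : f β ^ 2 - 1
        = (Real.exp (β ^ 2) - 1) * Real.cosh (β * h) ^ 2 + Real.sinh (β * h) ^ 2 := by
      simp only [hf]
      rw [mul_pow, he]
      nlinarith [Real.cosh_sq (β * h)]
    rw [key, div_pow]
    field_simp
  -- Step 2: u β / β → √(1+h^2)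
  have hE : Tendsto (fun β => u β / β) L (nhds (Real.sqrt (1 + h ^ 2))) := by
    have hcomp := (Real.continuous_sqrt.tendsto (1 + h ^ 2)).comp hD
    refine hcomp.congr' ?_
    filter_upwards [self_mem_nhdsWithin] with β (hβ : 0 < β)
    show Real.sqrt ((f β ^ 2 - 1) / β ^ 2) = u β / β
    rw [Real.sqrt_div (by nlinarith [hf1 β]) (β ^ 2), Real.sqrt_sq hβ.le]
  -- Step 3: arsinh (u β) / β → √(1+h^2)
  have huLim : Tendsto u L (nhdsWithin 0 {(0:ℝ)}ᶜ) := by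
    rw [tendsto_nhdsWithin_iff]
    constructor
    · have hc : Continuous u := by
        apply Real.continuous_sqrt.comp
        continuity
      have h0 : u 0 = 0 := by simp [hu, hf]
      simpa [h0] using (hc.tendsto 0).mono_left hLn
    · filter_upwards [self_mem_nhdsWithin] with β (hβ : 0 < β)
      have hpos : 0 < u β := Real.sqrt_pos.mpr (by nlinarith [hfgt β hβ])
      simpa using ne_of_gt hpos
  have hF : Tendsto (fun β => Real.arsinh (u β) / β) L (nhds (Real.sqrt (1 + h ^ 2))) := by
    have h1 : Tendsto (fun β => Real.arsinh (u β) / u β) L (nhds 1) :=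
      tendsto_arsinh_div.comp huLim
    have hmul := h1.mul hE
    rw [one_mul] at hmul
    refine hmul.congr' ?_
    filter_upwards [self_mem_nhdsWithin] with β (hβ : 0 < β)
    have hu0 : u β ≠ 0 := ne_of_gt (Real.sqrt_pos.mpr (by nlinarith [hfgt β hβ]))
    have hβ0 : β ≠ 0 := ne_of_gt hβ
    field_simp
  -- Step 4: conclude
  have hsq2 : Real.sqrt (1 + h ^ 2) ^ 2 = 1 + h ^ 2 := Real.sq_sqrt (by positivity)
  have hG : Tendsto (fun β => Real.sqrt ((Real.arsinh (u β) / β) ^ 2 - h ^ 2)) L (nhds 1) := by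
    have hsub := ((hF.pow 2).sub (tendsto_const_nhds (x := h ^ 2)))
    rw [hsq2] at hsub
    have h2 := (Real.continuous_sqrt.tendsto (1 + h ^ 2 - h ^ 2)).comp hsub
    simpa [Function.comp_def] using h2
  refine hG.congr' ?_
  filter_upwards [self_mem_nhdsWithin, (gt_mem_nhds hβc0).filter_mono hLn]
    with β (hβ : 0 < β) (hβc' : β < βc h)
  have hβ0 : β ≠ 0 := ne_of_gt hβ
  have hPhi : (1 / 2 : ℝ) * Real.exp (PhiREM βc β h) = f β := by
    rw [PhiREM, if_pos hβc'.le, Real.exp_add, Real.exp_add, Real.exp_log (by norm_num),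
      Real.exp_log (Real.cosh_pos _)]
    ring
  have harc : _root_.arcosh (f β) = Real.arsinh (u β) := by
    rw [_root_.arcosh, Real.arsinh]
    congr 1
    have h1 : (0:ℝ) ≤ f β ^ 2 - 1 := by nlinarith [hf1 β]
    have h2 : Real.sqrt (1 + u β ^ 2) = f β := by
      rw [hu]
      simp only
      rw [Real.sq_sqrt h1, show 1 + (f β ^ 2 - 1) = f β ^ 2 by ring,
        Real.sqrt_sq (by linarith [hf1 β])]
    rw [h2]
    ring
  show Real.sqrt ((Real.arsinh (u β) / β) ^ 2 - h ^ 2) = GammaC βc β h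
  rw [GammaC, hPhi, harc]
  congr 1
  rw [div_pow, inv_pow]
  ring
end
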